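/- For 0 < a < b, the integral of 1/(x·sqrt((b-x)(x-a))) over [a,b] equals π/sqrt(ab). -/

import Mathlib

open Real

theorem integral_inv_x_div_sqrt (a b : ℝ) (ha : 0 < a) (hab : a < b) :
    ∫ x in a..b, 1 / (x * Real.sqrt ((b - x) * (x - a))) = Real.pi / Real.sqrt (a * b) := by
  have hb : 0 < b := ha.trans hab
  have hba : 0 < b - a := sub_pos.2 hab
  have hab0 : 0 < a * b := mul_pos ha hb
  set c : ℝ := Real.sqrt (a * b) with hc
  have hc0 : 0 < c := Real.sqrt_pos.2 hab0
  have hc2 : c ^ 2 = a * b := Real.sq_sqrt hab0.le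
  set F : ℝ → ℝ := fun x => c⁻¹ * Real.arcsin (((a + b) * x - 2 * (a * b)) / ((b - a) * x)) with hF
  have hcont : ContinuousOn F (Set.Icc a b) := by
    apply Continuous.comp_continuousOn (by continuity : Continuous fun y => c⁻¹ * Real.arcsin y)
    apply ContinuousOn.div (by fun_prop) (by fun_prop)
    intro x hx
    have : 0 < x := lt_of_lt_of_le ha hx.1
    positivity
  have hderiv : ∀ x ∈ Set.Ioo a b,
      HasDerivAt F (1 / (x * Real.sqrt ((b - x) * (x - a)))) x := by
    intro x hx
    have hx0 : 0 < x := ha.trans hx.1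
    have hbx : 0 < b - x := sub_pos.2 hx.2
    have hxa : 0 < x - a := sub_pos.2 hx.1
    set u : ℝ := ((a + b) * x - 2 * (a * b)) / ((b - a) * x) with hu
    have hden : (b - a) * x ≠ 0 := by positivity
    have h1u : 1 - u ^ 2 = 4 * (a * b) * ((b - x) * (x - a)) / ((b - a) * x) ^ 2 := by
      rw [hu]; field_simp; ring
    have h1upos : 0 < 1 - u ^ 2 := by rw [h1u]; positivity
    have hune : u ≠ -1 := by nlinarith [sq_nonneg (u - 1)]
    have hune' : u ≠ 1 := by nlinarith [sq_nonneg (u + 1)]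
    have hud : HasDerivAt (fun y => ((a + b) * y - 2 * (a * b)) / ((b - a) * y))
        (2 * (a * b) / ((b - a) * x ^ 2)) x := by
      have h1 : HasDerivAt (fun y => (a + b) * y - 2 * (a * b)) (a + b) x := by
        simpa using ((hasDerivAt_id x).const_mul (a + b)).sub_const (2 * (a * b))
      have h2 : HasDerivAt (fun y => (b - a) * y) (b - a) x := by
        simpa using (hasDerivAt_id x).const_mul (b - a)
      have := h1.div h2 hden
      refine this.congr_deriv (Eq.symm ?_)
      field_simp
      ring
    have harc : HasDerivAt Real.arcsin (1 / Real.sqrt (1 - u ^ 2)) u :=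
      Real.hasDerivAt_arcsin hune hune'
    have hcomp := (harc.comp x hud).const_mul c⁻¹
    refine hcomp.congr_deriv (Eq.symm ?_)
    have hs : Real.sqrt (1 - u ^ 2)
        = 2 * c * Real.sqrt ((b - x) * (x - a)) / ((b - a) * x) := by
      have hsq2 : (2 * c * Real.sqrt ((b - x) * (x - a)) / ((b - a) * x)) ^ 2
          = 1 - u ^ 2 := by
        rw [h1u, div_pow, mul_pow, mul_pow, Real.sq_sqrt (by positivity : (0:ℝ) ≤ (b - x) * (x - a)), hc2]; norm_num
      rw [← hsq2, Real.sqrt_sq (by positivity)]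
    rw [hs]
    have hsq : 0 < Real.sqrt ((b - x) * (x - a)) := Real.sqrt_pos.2 (by positivity)
    field_simp
    linear_combination hc2
  have hnonneg : ∀ x ∈ Set.Ioo a b, 0 ≤ 1 / (x * Real.sqrt ((b - x) * (x - a))) := by
    intro x hx
    have hx0 : 0 < x := ha.trans hx.1
    positivity
  have hint : IntervalIntegrable (fun x => 1 / (x * Real.sqrt ((b - x) * (x - a))))
      MeasureTheory.volume a b := by
    apply intervalIntegral.intervalIntegrable_deriv_of_nonneg
    · rwa [Set.uIcc_of_le hab.le]
    · simpa [min_eq_left hab.le, max_eq_right hab.le] using hderiv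
    · simpa [min_eq_left hab.le, max_eq_right hab.le] using hnonneg
  rw [intervalIntegral.integral_eq_sub_of_hasDerivAt_of_le hab.le hcont hderiv hint]
  have hFa : F a = c⁻¹ * (-(Real.pi / 2)) := by
    have : ((a + b) * a - 2 * (a * b)) / ((b - a) * a) = -1 := by
      field_simp; ring
    rw [hF]; simp only [this, Real.arcsin_neg_one]
  have hFb : F b = c⁻¹ * (Real.pi / 2) := by
    have : ((a + b) * b - 2 * (a * b)) / ((b - a) * b) = 1 := by
      field_simp; ring
    rw [hF]; simp only [this, Real.arcsin_one]
  rw [hFa, hFb]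
  field_simp
  ring
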